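/- For all a > 0 and λ > 0, with t₁* = (3/2^{2/3})(λ a(a+1))^{1/3} − a and t₃* = √(2λ(a+1)) − a/2, the inequality t₁* ≤ t₃* holds, with equality if and only if λ = a²/(2(a+1)). -/

import Mathlib

/-- For `a > 0`, `λ > 0`, with `t₁* = (3/2^{2/3})(λ a (a+1))^{1/3} - a` and
`t₃* = √(2λ(a+1)) - a/2`, we have `t₁* ≤ t₃*`, with equality iff
`λ = a²/(2(a+1))`. -/
theorem t1_le_t3 (a lam : ℝ) (ha : 0 < a) (hlam : 0 < lam) :
    (3 / (2 : ℝ) ^ ((2 : ℝ) / 3)) * (lam * a * (a + 1)) ^ ((1 : ℝ) / 3) - a ≤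
        Real.sqrt (2 * lam * (a + 1)) - a / 2 ∧
      ((3 / (2 : ℝ) ^ ((2 : ℝ) / 3)) * (lam * a * (a + 1)) ^ ((1 : ℝ) / 3) - a =
          Real.sqrt (2 * lam * (a + 1)) - a / 2 ↔
        lam = a ^ 2 / (2 * (a + 1))) := by
  set s := Real.sqrt (2 * lam * (a + 1)) with hsdef
  have hs : 0 < s := Real.sqrt_pos.mpr (by positivity)
  have hs2 : s ^ 2 = 2 * lam * (a + 1) := Real.sq_sqrt (by positivity)
  set c := (s ^ 2 * a) ^ ((1 : ℝ) / 3) with hcdef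
  have hcpos : 0 < c := Real.rpow_pos_of_pos (by positivity) _
  have hc3 : c ^ 3 = s ^ 2 * a := by
    rw [hcdef, ← Real.rpow_natCast ((s ^ 2 * a) ^ ((1 : ℝ) / 3)) 3,
      ← Real.rpow_mul (by positivity)]
    norm_num
  -- rewrite the left-hand side
  have h1 : lam * a * (a + 1) = s ^ 2 * a / 2 := by rw [hs2]; ring
  have h2 : (3 / (2 : ℝ) ^ ((2 : ℝ) / 3)) * (lam * a * (a + 1)) ^ ((1 : ℝ) / 3)
      = 3 / 2 * c := by
    have h2pow : (2:ℝ) ^ ((1:ℝ)/3) * (2:ℝ) ^ ((2:ℝ)/3) = 2 := by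
      rw [← Real.rpow_add (by norm_num : (0:ℝ) < 2)]; norm_num
    rw [h1, Real.div_rpow (by positivity) (by norm_num), ← hcdef]
    have hne1 : ((2:ℝ) ^ ((1:ℝ)/3)) ≠ 0 := by positivity
    have hne2 : ((2:ℝ) ^ ((2:ℝ)/3)) ≠ 0 := by positivity
    field_simp
    linear_combination -h2pow
  rw [h2]
  have key : (s - c) ^ 2 * (2 * s + c) = s ^ 2 * (2 * s + a - 3 * c) := by
    linear_combination hc3
  constructor
  · -- inequality: 3c ≤ 2s + a
    nlinarith [mul_nonneg (sq_nonneg (s - c)) (by positivity : (0:ℝ) ≤ 2 * s + c),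
      sq_nonneg s, mul_pos hs hs]
  · constructor
    · intro h
      have h3 : 2 * s + a - 3 * c = 0 := by linarith
      have h4 : (s - c) ^ 2 * (2 * s + c) = 0 := by rw [key, h3]; ring
      have h5 : s = c := by
        have h6 : (s - c) ^ 2 = 0 := by
          rcases mul_eq_zero.mp h4 with h | h
          · exact h
          · nlinarith
        have := sq_eq_zero_iff.mp h6
        linarith
      have h7 : s = a := by nlinarith [hc3, h5, mul_pos hs hs]
      rw [h7] at hs2
      field_simp
      linarith
    · intro h
      have h8 : s ^ 2 = a ^ 2 := by
        rw [hs2, h]; field_simp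
      have h7 : s = a := by nlinarith [hs, ha]
      have hca : c = a := by
        rw [hcdef, h7, show a ^ 2 * a = a ^ 3 by ring,
          ← Real.rpow_natCast a 3, ← Real.rpow_mul ha.le]
        norm_num
      rw [hca, h7]
      ring
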